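/- arXiv:1908.06228 — 2 statements merged into one kernel-verified Lean document; each statement's English description precedes it below -/
import Mathlib

section
/- Let L_T(g) = ∫₀ᵀ ∫_Z (g log g − g + 1) dν dt for Borel measurable g : [0,T]×Z → [0,∞), and S^N = {g : L_T(g) ≤ N}. If L ∈ L²(ν) is such that for every Γ with ν(Γ) < ∞ there exists δ > 0 with ∫_Γ e^{δ L²} dν < ∞, then sup over g ∈ S^N of ∫₀ᵀ ∫_Z L(z) |g(t,z) − 1| ν(dz) dt is finite. -/
/- STATEMENT 12: Let L_T(g) = ∫₀ᵀ∫_Z (g log g − g + 1) dν dt and S^N = {g : L_T(g) ≤ N}.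
If L ∈ L²(ν) (nonnegative, as the coefficient functions of the paper) is such that for
every Γ with ν(Γ) < ∞ there exists δ > 0 with ∫_Γ e^{δL²} dν < ∞, then
sup_{g ∈ S^N} ∫₀ᵀ∫_Z L(z)|g(t,z) − 1| ν(dz) dt < ∞. -/

open MeasureTheory
open scoped ENNReal

noncomputable section

/-- the entropy functional `L_T(g) = ∫₀ᵀ∫_Z (g log g − g + 1) dν dt`
(the integrand is nonnegative, so we use the lower Lebesgue integral). -/
def entT {Z : Type*} [MeasurableSpace Z] (ν : Measure Z) (T : ℝ) (g : ℝ → Z → ℝ) : ℝ≥0∞ :=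
  ∫⁻ t in Set.Icc 0 T, ∫⁻ z, ENNReal.ofReal (g t z * Real.log (g t z) - g t z + 1) ∂ν

/-- `g ∈ S^N`: Borel measurable, nonnegative, with entropy at most `N`. -/
def memSN {Z : Type*} [MeasurableSpace Z] (ν : Measure Z) (T : ℝ) (N : ℝ)
    (g : ℝ → Z → ℝ) : Prop :=
  Measurable (fun p : ℝ × Z => g p.1 p.2) ∧ (∀ t z, 0 ≤ g t z) ∧
    entT ν T g ≤ ENNReal.ofReal N

lemma tangent_mul_log {c g : ℝ} (hc : 0 < c) (hg : 0 ≤ g) :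
    g * Real.log c + g - c ≤ g * Real.log g := by
  rcases eq_or_lt_of_le hg with h | h
  · simp [← h, hc.le]
  · have h1 : Real.log (c / g) ≤ c / g - 1 := Real.log_le_sub_one_of_pos (by positivity)
    rw [Real.log_div (ne_of_gt hc) (ne_of_gt h)] at h1
    have h3 := mul_le_mul_of_nonneg_left h1 h.le
    have h4 : g * (c / g - 1) = c - g := by field_simp
    rw [h4, mul_sub] at h3
    nlinarith

lemma sinh_ineq {u : ℝ} (hu : 0 ≤ u) : 2 * u ≤ Real.exp u - Real.exp (-u) := by
  have h1 : 1 + u + u ^ 2 / 2 ≤ Real.exp u := Real.quadratic_le_exp_of_nonneg hu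
  have h2 : Real.exp (-u) = (Real.exp u)⁻¹ := Real.exp_neg u
  have h3 : (0:ℝ) < Real.exp u := Real.exp_pos u
  have h5 : (0:ℝ) < 1 + u + u ^ 2 / 2 := by nlinarith
  have h4 : Real.exp (-u) ≤ (1 + u + u ^ 2 / 2)⁻¹ := by
    rw [h2]; exact inv_anti₀ h5 h1
  have h6 : (1 + u + u^2/2)⁻¹ * (1 + u + u^2/2) = 1 := inv_mul_cancel₀ (ne_of_gt h5)
  nlinarith [sq_nonneg (u^2)]

lemma young_ent {u g : ℝ} (hu : 0 ≤ u) (hg : 0 ≤ g) :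
    u * |g - 1| ≤ (g * Real.log g - g + 1) + (Real.exp u - u - 1) := by
  rcases le_total 1 g with h | h
  · rw [abs_of_nonneg (by linarith)]
    have := tangent_mul_log (c := Real.exp u) (Real.exp_pos u) hg
    rw [Real.log_exp] at this
    nlinarith
  · rw [abs_of_nonpos (by linarith)]
    have := tangent_mul_log (c := Real.exp (-u)) (Real.exp_pos _) hg
    rw [Real.log_exp] at this
    have h2 := sinh_ineq hu
    nlinarith

lemma exp_sub_le_sq {x : ℝ} (h1 : 0 ≤ x) (h2 : x ≤ 1) : Real.exp x - x - 1 ≤ x ^ 2 := by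
  have := Real.exp_bound' h1 h2 (n := 2) (by norm_num)
  simp [Finset.sum_range_succ, Nat.factorial] at this
  nlinarith

lemma exp_le_exp_sq {δ x : ℝ} (hδ : 0 < δ) (hx : 0 ≤ x) :
    Real.exp x ≤ Real.exp (1/(4*δ)) * Real.exp (δ * x ^ 2) := by
  rw [← Real.exp_add]
  apply Real.exp_le_exp.2
  have h : 0 ≤ (2 * δ * x - 1)^2 := sq_nonneg _
  have h4 : (0:ℝ) < 4 * δ := by linarith
  rw [div_add' _ _ _ (ne_of_gt h4), le_div_iff₀ h4]
  nlinarith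

lemma key_pointwise {δ l g : ℝ} (hδ : 0 < δ) (hl : 0 ≤ l) (hg : 0 ≤ g) :
    l * |g - 1| ≤ (g * Real.log g - g + 1) + l ^ 2 +
      (if 1 ≤ l then Real.exp (1/(4*δ)) * Real.exp (δ * l ^ 2) else 0) := by
  have hy := young_ent hl hg
  rcases le_or_gt 1 l with h | h
  · rw [if_pos h]
    have h1 : Real.exp l ≤ Real.exp (1/(4*δ)) * Real.exp (δ * l ^ 2) := exp_le_exp_sq hδ hl
    nlinarith [sq_nonneg l]
  · rw [if_neg (not_le.2 h)]
    have := exp_sub_le_sq hl h.le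
    nlinarith


theorem statement12 {Z : Type*} [MeasurableSpace Z] (ν : Measure Z) [SigmaFinite ν]
    (T : ℝ) (hT : 0 < T) (N : ℝ) (hN : 0 < N)
    (L : Z → ℝ) (hL0 : ∀ z, 0 ≤ L z) (hL2 : MemLp L 2 ν)
    (hLexp : ∀ Γ : Set Z, MeasurableSet Γ → ν Γ < ⊤ →
      ∃ δ > 0, (∫⁻ z in Γ, ENNReal.ofReal (Real.exp (δ * (L z) ^ 2)) ∂ν) < ⊤) :
    ∃ C : ℝ≥0∞, C < ⊤ ∧ ∀ g : ℝ → Z → ℝ, memSN ν T N g →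
      (∫⁻ t in Set.Icc 0 T, ∫⁻ z, ENNReal.ofReal (L z * |g t z - 1|) ∂ν) ≤ C := by
  classical
  have hLae : AEMeasurable L ν := hL2.aestronglyMeasurable.aemeasurable
  set L1 : Z → ℝ := fun z => max (hLae.mk L z) 0 with hL1def
  have hL1m : Measurable L1 := hLae.measurable_mk.max measurable_const
  have hL1ae : L =ᵐ[ν] L1 := hLae.ae_eq_mk.mono (fun z hz => by
    simp only [hL1def, ← hz, max_eq_left (hL0 z)])
  have hL10 : ∀ z, 0 ≤ L1 z := fun z => le_max_right _ _
  have hI2top : (∫⁻ z, ENNReal.ofReal ((L1 z)^2) ∂ν) < ⊤ := by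
    have h1 : Integrable (fun z => L z ^ 2) ν := hL2.integrable_sq
    have h2 : Integrable (fun z => L1 z ^ 2) ν :=
      h1.congr (hL1ae.mono fun z hz => by simp only [hz])
    exact h2.lintegral_lt_top
  set Γ : Set Z := {z | 1 ≤ L1 z} with hΓdef
  have hΓm : MeasurableSet Γ := measurableSet_le measurable_const hL1m
  have hΓfin : ν Γ < ⊤ := by
    have hle : ν Γ ≤ ∫⁻ z, ENNReal.ofReal ((L1 z)^2) ∂ν := by
      calc ν Γ = ∫⁻ z in Γ, 1 ∂ν := (setLIntegral_one Γ).symm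
        _ ≤ ∫⁻ z in Γ, ENNReal.ofReal ((L1 z)^2) ∂ν := by
            refine setLIntegral_mono (ENNReal.measurable_ofReal.comp (hL1m.pow_const 2))
              fun z hz => ?_
            rw [show (1:ℝ≥0∞) = ENNReal.ofReal 1 by simp]
            have h1z : (1:ℝ) ≤ L1 z := hz
            exact ENNReal.ofReal_le_ofReal (by nlinarith [hL10 z])
        _ ≤ ∫⁻ z, ENNReal.ofReal ((L1 z)^2) ∂ν := setLIntegral_le_lintegral _ _
    exact lt_of_le_of_lt hle hI2top
  obtain ⟨δ, hδ, hK⟩ := hLexp Γ hΓm hΓfin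
  have hK1 : (∫⁻ z in Γ, ENNReal.ofReal (Real.exp (δ * (L1 z)^2)) ∂ν) < ⊤ := by
    have heq : (fun z => ENNReal.ofReal (Real.exp (δ * (L1 z)^2)))
        =ᵐ[ν.restrict Γ] (fun z => ENNReal.ofReal (Real.exp (δ * (L z)^2))) :=
      ae_restrict_of_ae (hL1ae.mono fun z hz => by simp only [hz])
    rw [lintegral_congr_ae heq]
    exact hK
  set A : ℝ≥0∞ := (∫⁻ z, ENNReal.ofReal ((L1 z)^2) ∂ν)
      + ENNReal.ofReal (Real.exp (1/(4*δ)))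
        * (∫⁻ z in Γ, ENNReal.ofReal (Real.exp (δ * (L1 z)^2)) ∂ν) with hAdef
  have hAtop : A < ⊤ :=
    ENNReal.add_lt_top.2 ⟨hI2top, ENNReal.mul_lt_top ENNReal.ofReal_lt_top hK1⟩
  refine ⟨ENNReal.ofReal N + ENNReal.ofReal T * A, ?_, ?_⟩
  · exact ENNReal.add_lt_top.2 ⟨ENNReal.ofReal_lt_top,
      ENNReal.mul_lt_top ENNReal.ofReal_lt_top hAtop⟩
  rintro g ⟨hgm, hg0, hgent⟩
  have hinner : ∀ t : ℝ, (∫⁻ z, ENNReal.ofReal (L z * |g t z - 1|) ∂ν)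
      ≤ (∫⁻ z, ENNReal.ofReal (g t z * Real.log (g t z) - g t z + 1) ∂ν) + A := by
    intro t
    have hgtm : Measurable (g t) := hgm.comp measurable_prodMk_left
    set f1 : Z → ℝ≥0∞ := fun z =>
      ENNReal.ofReal (g t z * Real.log (g t z) - g t z + 1) with hf1def
    set f2 : Z → ℝ≥0∞ := fun z => ENNReal.ofReal ((L1 z)^2) with hf2def
    set f3 : Z → ℝ≥0∞ := Γ.indicator (fun z => ENNReal.ofReal (Real.exp (1/(4*δ)))
      * ENNReal.ofReal (Real.exp (δ * (L1 z)^2))) with hf3def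
    have hf1m : Measurable f1 :=
      ENNReal.measurable_ofReal.comp
        (((hgtm.mul (Real.measurable_log.comp hgtm)).sub hgtm).add_const 1)
    have hf2m : Measurable f2 := ENNReal.measurable_ofReal.comp (hL1m.pow_const 2)
    have hptwise : ∀ᵐ z ∂ν, ENNReal.ofReal (L z * |g t z - 1|) ≤ f1 z + (f2 z + f3 z) := by
      filter_upwards [hL1ae] with z hz
      have hkey := key_pointwise (l := L1 z) (g := g t z) hδ (hL10 z) (hg0 t z)
      have hstep : ENNReal.ofReal (L z * |g t z - 1|)
          ≤ ENNReal.ofReal ((g t z * Real.log (g t z) - g t z + 1) + (L1 z) ^ 2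
            + (if 1 ≤ L1 z then Real.exp (1/(4*δ)) * Real.exp (δ * (L1 z) ^ 2) else 0)) := by
        rw [hz]; exact ENNReal.ofReal_le_ofReal hkey
      have hite : ENNReal.ofReal
          (if 1 ≤ L1 z then Real.exp (1/(4*δ)) * Real.exp (δ * (L1 z)^2) else 0) = f3 z := by
        by_cases hzΓ : z ∈ Γ
        · have h1z : (1:ℝ) ≤ L1 z := hzΓ
          rw [if_pos h1z, hf3def, Set.indicator_of_mem hzΓ,
            ENNReal.ofReal_mul (Real.exp_nonneg _)]
        · have h1z : ¬ (1:ℝ) ≤ L1 z := hzΓ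
          rw [if_neg h1z, hf3def, Set.indicator_of_notMem hzΓ, ENNReal.ofReal_zero]
      calc ENNReal.ofReal (L z * |g t z - 1|)
          ≤ ENNReal.ofReal ((g t z * Real.log (g t z) - g t z + 1) + (L1 z) ^ 2
            + (if 1 ≤ L1 z then Real.exp (1/(4*δ)) * Real.exp (δ * (L1 z) ^ 2) else 0)) := hstep
        _ ≤ ENNReal.ofReal ((g t z * Real.log (g t z) - g t z + 1) + (L1 z) ^ 2)
            + ENNReal.ofReal
              (if 1 ≤ L1 z then Real.exp (1/(4*δ)) * Real.exp (δ * (L1 z) ^ 2) else 0) :=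
            ENNReal.ofReal_add_le
        _ ≤ (f1 z + f2 z) + f3 z := add_le_add ENNReal.ofReal_add_le (le_of_eq hite)
        _ = f1 z + (f2 z + f3 z) := add_assoc _ _ _
    calc (∫⁻ z, ENNReal.ofReal (L z * |g t z - 1|) ∂ν)
        ≤ ∫⁻ z, (f1 z + (f2 z + f3 z)) ∂ν := lintegral_mono_ae hptwise
      _ = (∫⁻ z, f1 z ∂ν) + ∫⁻ z, (f2 z + f3 z) ∂ν := lintegral_add_left hf1m _
      _ = (∫⁻ z, f1 z ∂ν) + ((∫⁻ z, f2 z ∂ν) + ∫⁻ z, f3 z ∂ν) := by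
          rw [lintegral_add_left hf2m]
      _ = (∫⁻ z, f1 z ∂ν) + A := by
          rw [hAdef]
          congr 1
          congr 1
          rw [hf3def, lintegral_indicator hΓm,
            lintegral_const_mul' _ _ ENNReal.ofReal_ne_top]
  calc (∫⁻ t in Set.Icc 0 T, ∫⁻ z, ENNReal.ofReal (L z * |g t z - 1|) ∂ν)
      ≤ ∫⁻ t in Set.Icc 0 T,
          ((∫⁻ z, ENNReal.ofReal (g t z * Real.log (g t z) - g t z + 1) ∂ν) + A) :=
        lintegral_mono fun t => hinner t
    _ = (∫⁻ t in Set.Icc 0 T,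
          ∫⁻ z, ENNReal.ofReal (g t z * Real.log (g t z) - g t z + 1) ∂ν)
          + A * (volume (Set.Icc (0:ℝ) T)) := by
        rw [lintegral_add_right _ measurable_const, setLIntegral_const]
    _ ≤ ENNReal.ofReal N + ENNReal.ofReal T * A := by
        refine add_le_add hgent ?_
        rw [Real.volume_Icc, sub_zero, mul_comm]

end
end

section
/- With L_T and S^N as above and L : Z → [0,∞) satisfying L ∈ L²(ν) and the exponential integrability condition on sets of finite ν-measure: for every ε > 0 there exists β > 0 such that for every Borel set A ⊂ [0,T] with Lebesgue measure at most β, sup_{g ∈ S^N} ∫_A ∫_Z L(z) |g(s,z) − 1| ν(dz) ds ≤ ε (uniform absolute continuity of the deviation integrals over S^N). -/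
/- STATEMENT 13: With L_T and S^N as before and L : Z → [0,∞) with L ∈ L²(ν) and the
exponential integrability condition on sets of finite ν-measure: for every ε > 0 there
exists β > 0 such that for every Borel set A ⊂ [0,T] of Lebesgue measure at most β,
sup_{g ∈ S^N} ∫_A ∫_Z L(z)|g(s,z) − 1| ν(dz) ds ≤ ε. -/

open MeasureTheory
open scoped ENNReal

section AuxLemmas

open Real


/-- `ℓ(b) = b log b - b + 1 ≥ 0` for `b ≥ 0`. -/
lemma ell_nonneg {b : ℝ} (hb : 0 ≤ b) : 0 ≤ b * Real.log b - b + 1 := by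
  rcases eq_or_lt_of_le hb with h | h
  · simp [← h]
  · have h1 : Real.log b⁻¹ ≤ b⁻¹ - 1 := Real.log_le_sub_one_of_pos (by positivity)
    rw [Real.log_inv] at h1
    have h2 := mul_le_mul_of_nonneg_left h1 h.le
    have h3 : b * b⁻¹ = 1 := mul_inv_cancel₀ (ne_of_gt h)
    nlinarith

lemma ell_quad_left {b : ℝ} (hb : 0 ≤ b) (h1 : b ≤ 1) :
    (1 - b) ^ 2 / 2 ≤ b * Real.log b - b + 1 := by
  rcases eq_or_lt_of_le hb with h0 | h0
  · rw [← h0]; norm_num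
  · have hcont : ContinuousOn (fun x : ℝ => x * Real.log x - x + 1 - (1 - x) ^ 2 / 2)
        (Set.Icc b 1) :=
      (((Real.continuous_mul_log.sub continuous_id).add continuous_const).sub
        (((continuous_const.sub continuous_id).pow 2).div_const 2)).continuousOn
    have hdiffAt : ∀ x : ℝ, x ≠ 0 → HasDerivAt
        (fun x : ℝ => x * Real.log x - x + 1 - (1 - x) ^ 2 / 2)
        (Real.log x + 1 - 1 - (2 : ℕ) * (1 - x) ^ (2 - 1) * (-1) / 2) x := by
      intro x hx
      exact (((Real.hasDerivAt_mul_log hx).sub (hasDerivAt_id' x)).add_const 1).sub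
        ((((hasDerivAt_id' x).const_sub 1).pow 2).div_const 2)
    have hanti : AntitoneOn (fun x : ℝ => x * Real.log x - x + 1 - (1 - x) ^ 2 / 2)
        (Set.Icc b 1) := by
      apply antitoneOn_of_deriv_nonpos (convex_Icc b 1) hcont
      · intro x hx
        rw [interior_Icc] at hx
        exact (hdiffAt x (ne_of_gt (lt_trans h0 hx.1))).differentiableAt.differentiableWithinAt
      · intro x hx
        rw [interior_Icc] at hx
        have hx0 : 0 < x := lt_trans h0 hx.1
        rw [(hdiffAt x (ne_of_gt hx0)).deriv]
        have hlog : Real.log x ≤ x - 1 := Real.log_le_sub_one_of_pos hx0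
        have hx1 : x < 1 := hx.2
        push_cast
        nlinarith
    have hle := hanti (Set.left_mem_Icc.2 h1) (Set.right_mem_Icc.2 h1) h1
    simp only [Real.log_one] at hle
    nlinarith

lemma ell_quad_right {b : ℝ} (h1 : 1 ≤ b) (h2 : b ≤ 2) :
    (b - 1) ^ 2 / 4 ≤ b * Real.log b - b + 1 := by
  have hcont : ContinuousOn (fun x : ℝ => x * Real.log x - x + 1 - (x - 1) ^ 2 / 4)
      (Set.Icc 1 b) :=
    (((Real.continuous_mul_log.sub continuous_id).add continuous_const).sub
      (((continuous_id.sub continuous_const).pow 2).div_const 4)).continuousOn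
  have hdiffAt : ∀ x : ℝ, x ≠ 0 → HasDerivAt
      (fun x : ℝ => x * Real.log x - x + 1 - (x - 1) ^ 2 / 4)
      (Real.log x + 1 - 1 - (2 : ℕ) * (x - 1) ^ (2 - 1) * 1 / 4) x := by
    intro x hx
    exact (((Real.hasDerivAt_mul_log hx).sub (hasDerivAt_id' x)).add_const 1).sub
      ((((hasDerivAt_id' x).sub_const 1).pow 2).div_const 4)
  have hmono : MonotoneOn (fun x : ℝ => x * Real.log x - x + 1 - (x - 1) ^ 2 / 4)
      (Set.Icc 1 b) := by
    apply monotoneOn_of_deriv_nonneg (convex_Icc 1 b) hcont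
    · intro x hx
      rw [interior_Icc] at hx
      exact (hdiffAt x (by linarith [hx.1])).differentiableAt.differentiableWithinAt
    · intro x hx
      rw [interior_Icc] at hx
      have hx1 : 1 < x := hx.1
      have hxb : x < b := hx.2
      have hx0 : 0 < x := by linarith
      rw [(hdiffAt x (ne_of_gt hx0)).deriv]
      have h1' : Real.log x⁻¹ ≤ x⁻¹ - 1 := Real.log_le_sub_one_of_pos (by positivity)
      rw [Real.log_inv] at h1'
      have hinv : x * x⁻¹ = 1 := mul_inv_cancel₀ (ne_of_gt hx0)
      push_cast
      nlinarith
  have hle := hmono (Set.left_mem_Icc.2 h1) (Set.right_mem_Icc.2 h1) h1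
  simp only [Real.log_one] at hle
  nlinarith

/-- quadratic bound: `(b-1)^2 ≤ 4 ℓ(b)` for `0 ≤ b ≤ 2`. -/
lemma ell_quad {b : ℝ} (hb : 0 ≤ b) (hb2 : b ≤ 2) :
    (b - 1) ^ 2 ≤ 4 * (b * Real.log b - b + 1) := by
  rcases le_or_gt b 1 with h1 | h1
  · have := ell_quad_left hb h1
    nlinarith
  · have := ell_quad_right h1.le hb2
    nlinarith

/-- linear bound: `b ≤ 6 ℓ(b)` for `b ≥ 2`. -/
lemma ell_lin {b : ℝ} (hb : 2 ≤ b) : b ≤ 6 * (b * Real.log b - b + 1) := by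
  have hbpos : 0 < b := by linarith
  have h1 : Real.log (2 / b) ≤ 2 / b - 1 := Real.log_le_sub_one_of_pos (by positivity)
  rw [Real.log_div (by norm_num) (ne_of_gt hbpos)] at h1
  have h2 : Real.log 2 + 1 - 2 / b ≤ Real.log b := by linarith
  have hlog2 : (0.6931471803 : ℝ) < Real.log 2 := Real.log_two_gt_d9
  have h3 : b * (Real.log 2 + 1 - 2 / b) ≤ b * Real.log b :=
    mul_le_mul_of_nonneg_left h2 hbpos.le
  have h4 : b * (2 / b) = 2 := by field_simp
  nlinarith

/-- Young-type inequality: `a b ≤ e^a + ℓ(b)` for `a, b ≥ 0`. -/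
lemma young_exp {a b : ℝ} (ha : 0 ≤ a) (hb : 0 ≤ b) :
    a * b ≤ Real.exp a + (b * Real.log b - b + 1) := by
  rcases eq_or_lt_of_le hb with h0 | h0
  · rw [← h0]; simp; positivity
  · have key : b * (a + 1 - Real.log b) ≤ Real.exp a := by
      set t := a + 1 - Real.log b with ht
      rcases le_or_gt t 0 with htn | htp
      · have : b * t ≤ 0 := mul_nonpos_of_nonneg_of_nonpos h0.le htn
        exact le_trans this (Real.exp_pos a).le
      · have hbt : b = Real.exp (a + 1 - t) := by
          rw [ht]; simp [Real.exp_log h0]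
        have h1 : t ≤ Real.exp (t - 1) := by
          have := Real.add_one_le_exp (t - 1); linarith
        calc b * t = Real.exp (a + 1 - t) * t := by rw [← hbt]
          _ ≤ Real.exp (a + 1 - t) * Real.exp (t - 1) :=
              mul_le_mul_of_nonneg_left h1 (Real.exp_pos _).le
          _ = Real.exp a := by rw [← Real.exp_add]; ring_nf
    nlinarith [Real.exp_pos a]

/-- master pointwise inequality -/
lemma key_ineq (θ σ c : ℝ) (hθ : 0 < θ) (hσ : 0 < σ) (hc : 0 ≤ c)
    {a b : ℝ} (ha : 0 ≤ a) (hb : 0 ≤ b) :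
    a * |b - 1| ≤ θ / 2 * a ^ 2 + (2 / θ + 6 * c + 1 / σ) * (b * Real.log b - b + 1)
      + (if c < a then (1 / σ) * Real.exp (σ * a) else 0) := by
  have hell := ell_nonneg hb
  have hite : 0 ≤ (if c < a then (1 / σ) * Real.exp (σ * a) else 0) := by
    split_ifs
    · positivity
    · exact le_rfl
  rcases le_or_gt b 2 with h2 | h2
  · have hquad := ell_quad hb h2
    have hamgm : a * |b - 1| ≤ θ / 2 * a ^ 2 + 1 / (2 * θ) * (b - 1) ^ 2 := by
      have h := sq_nonneg (θ * a - |b - 1|)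
      have habs : |b - 1| ^ 2 = (b - 1) ^ 2 := sq_abs _
      rw [div_mul_eq_mul_div, div_mul_eq_mul_div, div_add_div _ _ (by norm_num : (2:ℝ) ≠ 0)
        (by positivity : 2 * θ ≠ 0), le_div_iff₀ (by positivity)]
      nlinarith
    have hq2 : 1 / (2 * θ) * (b - 1) ^ 2 ≤ 2 / θ * (b * Real.log b - b + 1) := by
      rw [div_mul_eq_mul_div, div_mul_eq_mul_div, div_le_div_iff₀ (by positivity) hθ]
      nlinarith
    nlinarith [mul_nonneg (mul_nonneg (by norm_num : (0:ℝ) ≤ 6) hc) hell,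
      mul_nonneg (le_of_lt (by positivity : (0:ℝ) < 1 / σ)) hell]
  · have habs : |b - 1| = b - 1 := abs_of_nonneg (by linarith)
    rw [habs]
    rcases le_or_gt a c with hac | hac
    · have h6 := ell_lin h2.le
      have hcb : a * (b - 1) ≤ c * b := by nlinarith
      have h7 : c * b ≤ 6 * c * (b * Real.log b - b + 1) := by nlinarith
      have h8 : 0 ≤ 2 / θ * (b * Real.log b - b + 1) := by positivity
      have h9 : 0 ≤ 1 / σ * (b * Real.log b - b + 1) := by positivity
      nlinarith [sq_nonneg a]
    · rw [if_pos hac]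
      have hy := young_exp (mul_nonneg hσ.le ha) hb
      have hab : a * b ≤ 1 / σ * Real.exp (σ * a) + 1 / σ * (b * Real.log b - b + 1) := by
        rw [div_mul_eq_mul_div, div_mul_eq_mul_div, one_mul, one_mul,
          ← add_div, le_div_iff₀ hσ]
        nlinarith
      have h8 : 0 ≤ 2 / θ * (b * Real.log b - b + 1) := by positivity
      have h9 : 0 ≤ 6 * c * (b * Real.log b - b + 1) := by positivity
      nlinarith [sq_nonneg a, mul_nonneg ha hb]

lemma exp_quad {σ δ a : ℝ} (hδ : 0 < δ) :
    Real.exp (σ * a) ≤ Real.exp (σ ^ 2 / (4 * δ)) * Real.exp (δ * a ^ 2) := by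
  rw [← Real.exp_add]
  apply Real.exp_le_exp.2
  have h : σ * a - δ * a ^ 2 ≤ σ ^ 2 / (4 * δ) := by
    rw [le_div_iff₀ (by positivity)]
    nlinarith [sq_nonneg (2 * δ * a - σ)]
  linarith


end AuxLemmas

noncomputable section

theorem statement13 {Z : Type*} [MeasurableSpace Z] (ν : Measure Z) [SigmaFinite ν]
    (T : ℝ) (hT : 0 < T) (N : ℝ) (hN : 0 < N)
    (L : Z → ℝ) (hL0 : ∀ z, 0 ≤ L z) (hL2 : MemLp L 2 ν)
    (hLexp : ∀ Γ : Set Z, MeasurableSet Γ → ν Γ < ⊤ →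
      ∃ δ > 0, (∫⁻ z in Γ, ENNReal.ofReal (Real.exp (δ * (L z) ^ 2)) ∂ν) < ⊤) :
    ∀ ε > (0 : ℝ), ∃ β > (0 : ℝ), ∀ A : Set ℝ, MeasurableSet A → A ⊆ Set.Icc 0 T →
      MeasureTheory.volume A ≤ ENNReal.ofReal β →
      ∀ g : ℝ → Z → ℝ, memSN ν T N g →
        (∫⁻ s in A, ∫⁻ z, ENNReal.ofReal (L z * |g s z - 1|) ∂ν) ≤ ENNReal.ofReal ε := by
  intro ε hε
  classical
  -- measurable nonnegative version of L
  obtain ⟨L', hL'meas, hLL'⟩ : ∃ L' : Z → ℝ, Measurable L' ∧ L =ᵐ[ν] L' := by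
    have h := hL2.aestronglyMeasurable.aemeasurable
    exact ⟨h.mk L, h.measurable_mk, h.ae_eq_mk⟩
  set W : Z → ℝ := fun z => max (L' z) 0 with hWdef
  have hWmeas : Measurable W := hL'meas.max measurable_const
  have hLW : L =ᵐ[ν] W := hLL'.mono fun z hz => by
    simp only [hWdef]; rw [← hz, max_eq_left (hL0 z)]
  have hW0 : ∀ z, 0 ≤ W z := fun z => le_max_right _ _
  -- square integral
  set IL2 : ℝ≥0∞ := ∫⁻ z, (ENNReal.ofReal (W z)) ^ 2 ∂ν with hIL2def
  have hIL2 : IL2 < ⊤ := by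
    have h1 : (∫⁻ z, (‖L z‖₊ : ℝ≥0∞) ^ (2 : ℝ≥0∞).toReal ∂ν) < ⊤ :=
      lintegral_rpow_enorm_lt_top_of_eLpNorm_lt_top (by norm_num) (by norm_num) hL2.2
    have h2 : IL2 = ∫⁻ z, (‖L z‖₊ : ℝ≥0∞) ^ (2 : ℝ≥0∞).toReal ∂ν := by
      rw [hIL2def]
      refine lintegral_congr_ae (hLW.mono fun z hz => ?_)
      dsimp only
      rw [← enorm_eq_nnnorm, Real.enorm_eq_ofReal (hL0 z), hz]
      rw [show ((2:ℝ≥0∞).toReal) = ((2:ℕ):ℝ) by norm_num, ENNReal.rpow_natCast]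
    rw [h2]; exact h1
  -- constants
  set c : ℝ := ε / (36 * (N + 1)) with hcdef
  have hc : 0 < c := by positivity
  set σ : ℝ := 6 * (N + 1) / ε with hσdef
  have hσ : 0 < σ := by positivity
  set θ : ℝ := 12 * (N + 1) / ε with hθdef
  have hθ : 0 < θ := by positivity
  -- the finite-measure set Γ
  set Γ : Set Z := {z | c < W z} with hΓdef
  have hΓmeas : MeasurableSet Γ := measurableSet_lt measurable_const hWmeas
  have hΓfin : ν Γ < ⊤ := by
    have hcheb := mul_meas_ge_le_lintegral₀
      (μ := ν) (f := fun z => (ENNReal.ofReal (W z)) ^ 2)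
      ((hWmeas.ennreal_ofReal.pow measurable_const).aemeasurable) (ENNReal.ofReal c ^ 2)
    have hsub : Γ ⊆ {z | ENNReal.ofReal c ^ 2 ≤ (ENNReal.ofReal (W z)) ^ 2} := by
      intro z hz
      exact pow_le_pow_left₀ zero_le (ENNReal.ofReal_le_ofReal (le_of_lt hz)) 2
    by_contra hcon
    push_neg at hcon
    have hΓtop : ν Γ = ⊤ := top_le_iff.mp hcon
    have h2 : ν {z | ENNReal.ofReal c ^ 2 ≤ (ENNReal.ofReal (W z)) ^ 2} = ⊤ :=
      top_le_iff.mp (hΓtop ▸ measure_mono hsub)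
    rw [h2] at hcheb
    have hcpos : (0 : ℝ≥0∞) < ENNReal.ofReal c ^ 2 := by
      exact ENNReal.pow_pos (by rwa [ENNReal.ofReal_pos]) 2
    rw [ENNReal.mul_top (ne_of_gt hcpos)] at hcheb
    exact hIL2.ne (top_le_iff.mp hcheb)
  obtain ⟨δ, hδ, hJL⟩ := hLexp Γ hΓmeas hΓfin
  set J : ℝ≥0∞ := ∫⁻ z in Γ, ENNReal.ofReal (Real.exp (δ * W z ^ 2)) ∂ν with hJdef
  have hJ : J < ⊤ := by
    have hLWΓ : L =ᵐ[ν.restrict Γ] W := ae_restrict_of_ae hLW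
    have hJeq : J = ∫⁻ z in Γ, ENNReal.ofReal (Real.exp (δ * L z ^ 2)) ∂ν := by
      rw [hJdef]
      exact lintegral_congr_ae (hLWΓ.mono fun z hz => by dsimp only; rw [hz])
    rw [hJeq]; exact hJL
  set K : ℝ≥0∞ := ENNReal.ofReal (Real.exp (σ ^ 2 / (4 * δ))) * J with hKdef
  have hK : K < ⊤ := ENNReal.mul_lt_top ENNReal.ofReal_lt_top hJ
  set M : ℝ≥0∞ := ENNReal.ofReal (θ / 2) * IL2 + ENNReal.ofReal (1 / σ) * K with hMdef
  have hM : M < ⊤ := by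
    rw [hMdef]
    exact ENNReal.add_lt_top.2 ⟨ENNReal.mul_lt_top ENNReal.ofReal_lt_top hIL2,
      ENNReal.mul_lt_top ENNReal.ofReal_lt_top hK⟩
  set β : ℝ := (ε / 2) / (M.toReal + 1) with hβdef
  have hβ : 0 < β := by positivity
  refine ⟨β, hβ, ?_⟩
  intro A hAmeas hAsub hAvol g hg
  obtain ⟨hgmeas, hg0, hgent⟩ := hg
  set ℓg : ℝ × Z → ℝ≥0∞ :=
    fun p => ENNReal.ofReal (g p.1 p.2 * Real.log (g p.1 p.2) - g p.1 p.2 + 1) with hℓgdef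
  have hℓgmeas : Measurable ℓg :=
    (((hgmeas.mul (Real.measurable_log.comp hgmeas)).sub hgmeas).add_const 1).ennreal_ofReal
  set μA : Measure (ℝ × Z) := (volume.restrict A).prod ν with hμAdef
  have hFmeas : Measurable fun p : ℝ × Z => ENNReal.ofReal (W p.2 * |g p.1 p.2 - 1|) :=
    ((hWmeas.comp measurable_snd).mul ((hgmeas.sub measurable_const).abs)).ennreal_ofReal
  have step1 : (∫⁻ s in A, ∫⁻ z, ENNReal.ofReal (L z * |g s z - 1|) ∂ν)
      = ∫⁻ s in A, ∫⁻ z, ENNReal.ofReal (W z * |g s z - 1|) ∂ν :=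
    lintegral_congr fun s =>
      lintegral_congr_ae (hLW.mono fun z hz => by dsimp only; rw [hz])
  have step2 : (∫⁻ s in A, ∫⁻ z, ENNReal.ofReal (W z * |g s z - 1|) ∂ν)
      = ∫⁻ p, ENNReal.ofReal (W p.2 * |g p.1 p.2 - 1|) ∂μA :=
    (lintegral_prod _ hFmeas.aemeasurable).symm
  rw [step1, step2]
  set k : ℝ := 2 / θ + 6 * c + 1 / σ with hkdef
  have hk0 : 0 ≤ k := by positivity
  set G1 : ℝ × Z → ℝ≥0∞ := fun p => ENNReal.ofReal (θ / 2) * (ENNReal.ofReal (W p.2)) ^ 2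
    with hG1
  set G2 : ℝ × Z → ℝ≥0∞ := fun p => ENNReal.ofReal k * ℓg p with hG2
  set G3 : ℝ × Z → ℝ≥0∞ := fun p => ENNReal.ofReal (1 / σ) *
      Γ.indicator (fun z => ENNReal.ofReal (Real.exp (σ * W z))) p.2 with hG3
  have hG1meas : Measurable G1 :=
    measurable_const.mul (((hWmeas.comp measurable_snd).ennreal_ofReal).pow measurable_const)
  have hG2meas : Measurable G2 := measurable_const.mul hℓgmeas
  have hindmeas : Measurable fun z => Γ.indicator
      (fun z => ENNReal.ofReal (Real.exp (σ * W z))) z :=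
    Measurable.indicator ((Real.measurable_exp.comp (hWmeas.const_mul σ)).ennreal_ofReal) hΓmeas
  have hindmeas2 : Measurable fun p : ℝ × Z => Γ.indicator
      (fun z => ENNReal.ofReal (Real.exp (σ * W z))) p.2 := hindmeas.comp measurable_snd
  have hG3meas : Measurable G3 := measurable_const.mul hindmeas2
  have hpt : ∀ p : ℝ × Z, ENNReal.ofReal (W p.2 * |g p.1 p.2 - 1|) ≤ G1 p + G2 p + G3 p := by
    rintro ⟨s, z⟩
    have hkey := key_ineq θ σ c hθ hσ hc.le (hW0 z) (hg0 s z)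
    have h1 : ENNReal.ofReal (W z * |g s z - 1|) ≤
        ENNReal.ofReal (θ / 2 * W z ^ 2)
          + ENNReal.ofReal ((2 / θ + 6 * c + 1 / σ) *
              (g s z * Real.log (g s z) - g s z + 1))
          + ENNReal.ofReal (if c < W z then (1 / σ) * Real.exp (σ * W z) else 0) := by
      refine le_trans (ENNReal.ofReal_le_ofReal hkey) ?_
      refine le_trans ENNReal.ofReal_add_le ?_
      exact add_le_add_left ENNReal.ofReal_add_le _
    refine le_trans h1 (add_le_add (add_le_add ?_ ?_) ?_)
    · refine le_of_eq ?_
      rw [hG1]; dsimp only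
      rw [ENNReal.ofReal_mul (by positivity), ENNReal.ofReal_pow (hW0 z)]
    · refine le_of_eq ?_
      rw [hG2, hℓgdef]; dsimp only
      rw [ENNReal.ofReal_mul hk0]
    · refine le_of_eq ?_
      rw [hG3]; dsimp only
      by_cases hzΓ : z ∈ Γ
      · have hzc : c < W z := hzΓ
        rw [Set.indicator_of_mem hzΓ, if_pos hzc, ENNReal.ofReal_mul (by positivity)]
      · have hzc : ¬ c < W z := hzΓ
        rw [Set.indicator_of_notMem hzΓ, if_neg hzc]
        simp
  have hsqmeas : Measurable fun p : ℝ × Z => (ENNReal.ofReal (W p.2)) ^ 2 :=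
    ((hWmeas.comp measurable_snd).ennreal_ofReal).pow measurable_const
  have hT1 : (∫⁻ p, G1 p ∂μA) = ENNReal.ofReal (θ / 2) * IL2 * volume A := by
    rw [hG1, lintegral_const_mul _ hsqmeas]
    rw [hμAdef, lintegral_prod _ hsqmeas.aemeasurable]
    simp only []
    rw [setLIntegral_const, mul_assoc]
  have hT2 : (∫⁻ p, G2 p ∂μA) ≤ ENNReal.ofReal k * ENNReal.ofReal N := by
    rw [hG2, lintegral_const_mul _ hℓgmeas]
    refine mul_le_mul_right ?_ _
    have e1 : (∫⁻ p, ℓg p ∂μA) = ∫⁻ s in A, ∫⁻ z, ℓg (s, z) ∂ν :=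
      lintegral_prod _ hℓgmeas.aemeasurable
    have e2 : entT ν T g = ∫⁻ s in Set.Icc 0 T, ∫⁻ z, ℓg (s, z) ∂ν := rfl
    rw [e1]
    exact le_trans (lintegral_mono_set hAsub) (le_trans (le_of_eq e2.symm) hgent)
  have hT3 : (∫⁻ p, G3 p ∂μA) ≤ ENNReal.ofReal (1 / σ) * K * volume A := by
    rw [hG3, lintegral_const_mul _ hindmeas2]
    have e1 : (∫⁻ p : ℝ × Z, Γ.indicator
          (fun z => ENNReal.ofReal (Real.exp (σ * W z))) p.2 ∂μA)
        = (∫⁻ z, Γ.indicator (fun z => ENNReal.ofReal (Real.exp (σ * W z))) z ∂ν)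
            * volume A := by
      rw [hμAdef, lintegral_prod _ hindmeas2.aemeasurable]
      simp only []
      rw [setLIntegral_const]
    rw [e1]
    have e2 : (∫⁻ z, Γ.indicator (fun z => ENNReal.ofReal (Real.exp (σ * W z))) z ∂ν) ≤ K := by
      have hexpm : Measurable fun z => ENNReal.ofReal (Real.exp (δ * W z ^ 2)) :=
        (Real.measurable_exp.comp ((hWmeas.pow measurable_const).const_mul δ)).ennreal_ofReal
      rw [lintegral_indicator hΓmeas _, hKdef, hJdef, ← lintegral_const_mul _ hexpm]
      refine lintegral_mono fun z => ?_
      rw [← ENNReal.ofReal_mul (by positivity)]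
      exact ENNReal.ofReal_le_ofReal (exp_quad hδ)
    rw [mul_assoc]
    exact mul_le_mul_right (mul_le_mul_left e2 _) _
  have hkN : k * N ≤ ε / 2 := by
    have hεne : ε ≠ 0 := ne_of_gt hε
    have hN1 : (0:ℝ) < N + 1 := by linarith
    have e1 : k = ε / (2 * (N + 1)) := by
      rw [hkdef, hθdef, hσdef, hcdef]
      field_simp
      ring
    rw [e1, div_mul_eq_mul_div, div_le_iff₀ (by positivity : (0:ℝ) < 2 * (N + 1))]
    nlinarith
  have hfin1 : M * volume A ≤ ENNReal.ofReal (ε / 2) := by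
    have hbound : M.toReal * β ≤ ε / 2 := by
      have hMt : 0 ≤ M.toReal := ENNReal.toReal_nonneg
      rw [hβdef, show M.toReal * (ε / 2 / (M.toReal + 1))
        = (M.toReal / (M.toReal + 1)) * (ε / 2) from by ring]
      have h1 : M.toReal / (M.toReal + 1) ≤ 1 := by
        rw [div_le_one (by linarith)]; linarith
      calc M.toReal / (M.toReal + 1) * (ε / 2) ≤ 1 * (ε / 2) :=
            mul_le_mul_of_nonneg_right h1 (by positivity)
        _ = ε / 2 := one_mul _
    calc M * volume A ≤ M * ENNReal.ofReal β := mul_le_mul_right hAvol M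
      _ = ENNReal.ofReal M.toReal * ENNReal.ofReal β := by rw [ENNReal.ofReal_toReal hM.ne]
      _ = ENNReal.ofReal (M.toReal * β) := (ENNReal.ofReal_mul ENNReal.toReal_nonneg).symm
      _ ≤ ENNReal.ofReal (ε / 2) := ENNReal.ofReal_le_ofReal hbound
  calc (∫⁻ p, ENNReal.ofReal (W p.2 * |g p.1 p.2 - 1|) ∂μA)
      ≤ ∫⁻ p, (G1 p + G2 p + G3 p) ∂μA := lintegral_mono hpt
    _ = (∫⁻ p, G1 p ∂μA) + (∫⁻ p, G2 p ∂μA) + (∫⁻ p, G3 p ∂μA) := by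
        rw [lintegral_add_right _ hG3meas, lintegral_add_right _ hG2meas]
    _ ≤ (ENNReal.ofReal (θ / 2) * IL2 * volume A + ENNReal.ofReal k * ENNReal.ofReal N)
          + ENNReal.ofReal (1 / σ) * K * volume A :=
        add_le_add (add_le_add (le_of_eq hT1) hT2) hT3
    _ = M * volume A + ENNReal.ofReal (k * N) := by
        rw [hMdef, ENNReal.ofReal_mul hk0, add_mul]
        ring
    _ ≤ ENNReal.ofReal (ε / 2) + ENNReal.ofReal (ε / 2) :=
        add_le_add hfin1 (ENNReal.ofReal_le_ofReal hkN)
    _ = ENNReal.ofReal ε := by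
        rw [← ENNReal.ofReal_add (by positivity) (by positivity)]
        norm_num


end
end
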